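/- arXiv:1803.05103 — 2 statements merged into one kernel-verified Lean document; each statement's English description precedes it below -/
import Mathlib

section
/- Let c: X × U → ℝ be measurable and bounded, Q a stochastic kernel from X to Y, and Γ the set of measurable functions γ: Y → U. Define J*(P,Q) = inf_{γ ∈ Γ} ∫∫ c(x, γ(y)) Q(dy|x) P(dx). Then for all probability measures P, P' on X, |J*(P,Q) − J*(P',Q)| ≤ ‖c‖_∞ · ‖P − P'‖_TV. In particular J*(·,Q) is continuous in total variation. -/
open MeasureTheory ProbabilityTheory Filter

/-- Total variation distance (factor-2 convention). -/
noncomputable def tvDist {α : Type*} [MeasurableSpace α] (μ ν : Measure α) : ℝ :=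
  2 * ⨆ B : {B : Set α // MeasurableSet B}, |(μ B.1).toReal - (ν B.1).toReal|

/-- The single-stage optimal cost `J*(P,Q) = inf_{γ measurable} ∫∫ c(x,γ(y)) Q(dy|x) P(dx)`. -/
noncomputable def Jstar {X Y U : Type*} [MeasurableSpace X] [MeasurableSpace Y]
    [MeasurableSpace U] (c : X → U → ℝ) (Q : Kernel X Y) (P : Measure X) : ℝ :=
  ⨅ γ : {γ : Y → U // Measurable γ}, ∫ p, c p.1 (γ.1 p.2) ∂(P ⊗ₘ Q)

lemma tv_aux_bdd {α : Type*} [MeasurableSpace α] (μ ν : Measure α)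
    [IsProbabilityMeasure μ] [IsProbabilityMeasure ν] :
    BddAbove (Set.range fun B : {B : Set α // MeasurableSet B} =>
      |(μ B.1).toReal - (ν B.1).toReal|) := by
  refine ⟨2, ?_⟩
  rintro r ⟨B, rfl⟩
  have h1 : (μ B.1).toReal ≤ 1 := by
    have h := ENNReal.toReal_mono (measure_ne_top μ _) (measure_mono (Set.subset_univ B.1))
    simpa using h
  have h2 : (ν B.1).toReal ≤ 1 := by
    have h := ENNReal.toReal_mono (measure_ne_top ν _) (measure_mono (Set.subset_univ B.1))
    simpa using h
  have h3 : (0:ℝ) ≤ (μ B.1).toReal := ENNReal.toReal_nonneg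
  have h4 : (0:ℝ) ≤ (ν B.1).toReal := ENNReal.toReal_nonneg
  rw [abs_le]
  constructor <;> linarith

/-- One-sided TV bound for integrals of `[0,M]`-valued functions. -/
lemma integral_le_integral_add_tv {α : Type*} [MeasurableSpace α] (μ ν : Measure α)
    [IsProbabilityMeasure μ] [IsProbabilityMeasure ν] {g : α → ℝ} (hg : Measurable g)
    {M : ℝ} (hM : 0 ≤ M) (hg0 : ∀ x, 0 ≤ g x) (hgM : ∀ x, g x ≤ M) :
    ∫ x, g x ∂μ ≤ ∫ x, g x ∂ν +
      M * ⨆ B : {B : Set α // MeasurableSet B}, |(μ B.1).toReal - (ν B.1).toReal| := by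
  obtain ⟨S, hS, h1, h2⟩ := hahn_decomposition (μ := μ) (ν := ν)
  set G : α → ENNReal := fun x => ENNReal.ofReal (g x) with hG
  have hGmeas : Measurable G := hg.ennreal_ofReal
  have hGle : ∀ x, G x ≤ ENNReal.ofReal M := fun x => ENNReal.ofReal_le_ofReal (hgM x)
  have hrle : ν.restrict S ≤ μ.restrict S := by
    rw [Measure.le_iff]
    intro t ht
    rw [Measure.restrict_apply ht, Measure.restrict_apply ht]
    exact h1 _ (ht.inter hS) Set.inter_subset_right
  have hrle' : μ.restrict Sᶜ ≤ ν.restrict Sᶜ := by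
    rw [Measure.le_iff]
    intro t ht
    rw [Measure.restrict_apply ht, Measure.restrict_apply ht]
    exact h2 _ (ht.inter hS.compl) Set.inter_subset_right
  have hνS : ν S ≤ μ S := h1 S hS Set.Subset.rfl
  -- the key lintegral estimate
  have hsplit : μ.restrict S = (μ.restrict S - ν.restrict S) + ν.restrict S :=
    (MeasureTheory.Measure.sub_add_cancel_of_le hrle).symm
  have hsubuniv : (μ.restrict S - ν.restrict S) Set.univ = μ S - ν S := by
    rw [Measure.sub_apply MeasurableSet.univ hrle]
    simp
  have key : ∫⁻ x, G x ∂μ ≤ ∫⁻ x, G x ∂ν + ENNReal.ofReal M * (μ S - ν S) := by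
    calc ∫⁻ x, G x ∂μ = ∫⁻ x in S, G x ∂μ + ∫⁻ x in Sᶜ, G x ∂μ :=
          (lintegral_add_compl _ hS).symm
      _ ≤ (ENNReal.ofReal M * (μ S - ν S) + ∫⁻ x in S, G x ∂ν) + ∫⁻ x in Sᶜ, G x ∂ν := by
          gcongr ?_ + ?_
          · rw [hsplit, lintegral_add_measure]
            gcongr
            calc ∫⁻ x, G x ∂(μ.restrict S - ν.restrict S)
                ≤ ∫⁻ _, ENNReal.ofReal M ∂(μ.restrict S - ν.restrict S) :=
                  lintegral_mono hGle
              _ = ENNReal.ofReal M * (μ S - ν S) := by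
                  rw [lintegral_const, hsubuniv]
          · exact lintegral_mono' hrle' le_rfl
      _ = ∫⁻ x, G x ∂ν + ENNReal.ofReal M * (μ S - ν S) := by
          rw [← lintegral_add_compl G hS (μ := ν)]; ring
  have hνfin : ∫⁻ x, G x ∂ν ≠ ⊤ := by
    refine ne_top_of_le_ne_top ?_ (lintegral_mono hGle)
    simp
  have hmulfin : ENNReal.ofReal M * (μ S - ν S) ≠ ⊤ :=
    ENNReal.mul_ne_top ENNReal.ofReal_ne_top
      (ne_top_of_le_ne_top (measure_ne_top μ S) tsub_le_self)
  have hint : ∀ (ρ : Measure α), ∫ x, g x ∂ρ = (∫⁻ x, G x ∂ρ).toReal := fun ρ =>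
    integral_eq_lintegral_of_nonneg_ae (Eventually.of_forall hg0) hg.aestronglyMeasurable
  have hreal : ∫ x, g x ∂μ ≤ ∫ x, g x ∂ν + M * ((μ S).toReal - (ν S).toReal) := by
    rw [hint μ, hint ν]
    have h := ENNReal.toReal_mono (by
      exact ENNReal.add_ne_top.2 ⟨hνfin, hmulfin⟩) key
    rwa [ENNReal.toReal_add hνfin hmulfin, ENNReal.toReal_mul, ENNReal.toReal_ofReal hM,
      ENNReal.toReal_sub_of_le hνS (measure_ne_top μ S)] at h
  refine hreal.trans ?_
  gcongr
  calc (μ S).toReal - (ν S).toReal ≤ |(μ S).toReal - (ν S).toReal| := le_abs_self _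
    _ ≤ _ := le_ciSup (tv_aux_bdd μ ν) ⟨S, hS⟩

/-- For bounded measurable nonnegative cost, the single-stage optimal cost is Lipschitz in the
prior for the total variation distance: `|J*(P,Q) − J*(P',Q)| ≤ ‖c‖_∞ ‖P − P'‖_TV`. -/
theorem Jstar_tv_continuous
    {X Y U : Type*} [MeasurableSpace X] [MeasurableSpace Y] [MeasurableSpace U] [Nonempty U]
    (c : X → U → ℝ) (hc : Measurable (Function.uncurry c))
    (hc0 : ∀ x u, 0 ≤ c x u) (M : ℝ) (hcM : ∀ x u, |c x u| ≤ M)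
    (Q : Kernel X Y) [IsMarkovKernel Q]
    (P P' : Measure X) [IsProbabilityMeasure P] [IsProbabilityMeasure P'] :
    |Jstar c Q P - Jstar c Q P'| ≤ M * tvDist P P' := by
  have hX : Nonempty X := by
    by_contra h
    have h0 : (Set.univ : Set X) = ∅ := Set.univ_eq_empty_iff.mpr (not_nonempty_iff.mp h)
    have := measure_univ (μ := P)
    rw [h0, measure_empty] at this
    exact zero_ne_one this
  have hM : 0 ≤ M := le_trans (hc0 (Classical.arbitrary X) (Classical.arbitrary U))
    (le_trans (le_abs_self _) (hcM _ _))
  haveI : Nonempty {γ : Y → U // Measurable γ} :=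
    ⟨⟨fun _ => Classical.arbitrary U, measurable_const⟩⟩
  set D := ⨆ B : {B : Set X // MeasurableSet B}, |(P B.1).toReal - (P' B.1).toReal| with hD
  have hD0 : 0 ≤ D := Real.iSup_nonneg fun B => abs_nonneg _
  -- the per-policy bound
  have hkey : ∀ (R R' : Measure X), IsProbabilityMeasure R → IsProbabilityMeasure R' →
      ∀ γ : {γ : Y → U // Measurable γ},
      ∫ p, c p.1 (γ.1 p.2) ∂(R ⊗ₘ Q) ≤ ∫ p, c p.1 (γ.1 p.2) ∂(R' ⊗ₘ Q) +
        M * ⨆ B : {B : Set X // MeasurableSet B}, |(R B.1).toReal - (R' B.1).toReal| := by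
    intro R R' hR hR' γ
    have hfm : Measurable (fun p : X × Y => c p.1 (γ.1 p.2)) :=
      hc.comp (measurable_fst.prodMk (γ.2.comp measurable_snd))
    set g : X → ℝ := fun x => ∫ y, c x (γ.1 y) ∂Q x with hg
    have hgm : Measurable g :=
      (hfm.stronglyMeasurable.integral_kernel_prod_right' (κ := Q)).measurable
    have hg0 : ∀ x, 0 ≤ g x := fun x => integral_nonneg fun y => hc0 _ _
    have hgM : ∀ x, g x ≤ M := by
      intro x
      have h := norm_integral_le_of_norm_le_const (μ := Q x)
        (f := fun y => c x (γ.1 y)) (C := M)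
        (Eventually.of_forall fun y => by simpa [Real.norm_eq_abs] using hcM x (γ.1 y))
      simp only [measure_univ, ENNReal.toReal_one, mul_one, probReal_univ] at h
      exact le_trans (le_trans (le_abs_self _) (le_of_eq (Real.norm_eq_abs _).symm)) h
    have hIntR : ∀ (R₀ : Measure X), IsProbabilityMeasure R₀ →
        Integrable (fun p : X × Y => c p.1 (γ.1 p.2)) (R₀ ⊗ₘ Q) := by
      intro R₀ hR₀
      exact (integrable_const M).mono' hfm.aestronglyMeasurable
        (Eventually.of_forall fun p => by
          simpa [Real.norm_eq_abs] using hcM p.1 (γ.1 p.2))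
    have heq : ∀ (R₀ : Measure X), IsProbabilityMeasure R₀ →
        ∫ p, c p.1 (γ.1 p.2) ∂(R₀ ⊗ₘ Q) = ∫ x, g x ∂(R₀) := by
      intro R₀ hR₀
      exact Measure.integral_compProd (hIntR R₀ hR₀)
    rw [heq R hR, heq R' hR']
    exact integral_le_integral_add_tv R R' hgm hM hg0 hgM
  have hbdd : ∀ (R : Measure X), IsProbabilityMeasure R →
      BddBelow (Set.range fun γ : {γ : Y → U // Measurable γ} =>
        ∫ p, c p.1 (γ.1 p.2) ∂(R ⊗ₘ Q)) := by
    intro R hR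
    exact ⟨0, by rintro r ⟨γ, rfl⟩; exact integral_nonneg fun p => hc0 _ _⟩
  have hmain : ∀ (R R' : Measure X), IsProbabilityMeasure R → IsProbabilityMeasure R' →
      Jstar c Q R ≤ Jstar c Q R' +
        M * ⨆ B : {B : Set X // MeasurableSet B}, |(R B.1).toReal - (R' B.1).toReal| := by
    intro R R' hR hR'
    have h : Jstar c Q R -
        M * (⨆ B : {B : Set X // MeasurableSet B}, |(R B.1).toReal - (R' B.1).toReal|) ≤
        Jstar c Q R' := by
      refine le_ciInf fun γ => ?_
      have h1 : Jstar c Q R ≤ ∫ p, c p.1 (γ.1 p.2) ∂(R ⊗ₘ Q) := ciInf_le (hbdd R hR) γ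
      have h2 := hkey R R' hR hR' γ
      linarith
    linarith
  have hforward := hmain P P' ‹_› ‹_›
  have hbackward := hmain P' P ‹_› ‹_›
  have hswap : (⨆ B : {B : Set X // MeasurableSet B}, |(P' B.1).toReal - (P B.1).toReal|) = D := by
    rw [hD]
    congr 1
    ext B
    rw [abs_sub_comm]
  rw [hswap] at hbackward
  have htv : tvDist P P' = 2 * D := rfl
  rw [htv, abs_le]
  constructor <;> nlinarith
end

section
/- Suppose the observation kernel Q is continuous in total variation (x_n → x implies ‖Q(·|x_n) − Q(·|x)‖_TV → 0), c: X×U → ℝ is bounded and continuous, and U is compact. Then for any x_k → x, sup over all measurable policies γ: Y → U of |∫ Q(dy|x_k) c(x_k, γ(y)) − ∫ Q(dy|x) c(x, γ(y))| → 0; i.e., the family of functions x ↦ ∫ Q(dy|x) c(x,γ(y)), γ ∈ Γ, is equicontinuous. -/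
open MeasureTheory ProbabilityTheory Filter

lemma supDiff_nonneg {α : Type*} [MeasurableSpace α] (μ ν : Measure α) :
    0 ≤ ⨆ B : {B : Set α // MeasurableSet B}, |(μ B.1).toReal - (ν B.1).toReal| :=
  Real.iSup_nonneg (fun _ => abs_nonneg _)

lemma tvDist_nonneg {α : Type*} [MeasurableSpace α] (μ ν : Measure α) :
    0 ≤ tvDist μ ν := by
  have := supDiff_nonneg μ ν
  unfold tvDist; linarith

lemma abs_diff_le_supDiff {α : Type*} [MeasurableSpace α] (μ ν : Measure α)
    [IsProbabilityMeasure μ] [IsProbabilityMeasure ν] {B : Set α} (hB : MeasurableSet B) :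
    |(μ B).toReal - (ν B).toReal| ≤
      ⨆ B : {B : Set α // MeasurableSet B}, |(μ B.1).toReal - (ν B.1).toReal| := by
  have hbdd : BddAbove (Set.range fun B : {B : Set α // MeasurableSet B} =>
      |(μ B.1).toReal - (ν B.1).toReal|) := by
    refine ⟨2, ?_⟩
    rintro r ⟨C, rfl⟩
    have h1 : (μ C.1).toReal ≤ 1 := by
      have := prob_le_one (μ := μ) (s := C.1)
      simpa using ENNReal.toReal_mono (by simp) this
    have h2 : (ν C.1).toReal ≤ 1 := by
      have := prob_le_one (μ := ν) (s := C.1)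
      simpa using ENNReal.toReal_mono (by simp) this
    have h1' : 0 ≤ (μ C.1).toReal := ENNReal.toReal_nonneg
    have h2' : 0 ≤ (ν C.1).toReal := ENNReal.toReal_nonneg
    rw [abs_sub_le_iff]; constructor <;> linarith
  exact le_ciSup hbdd (⟨B, hB⟩ : {B : Set α // MeasurableSet B})

/-- Key estimate: integrals of a bounded measurable function against two probability
measures differ by at most `M * tvDist`. -/
lemma abs_integral_sub_le_tvDist {α : Type*} [MeasurableSpace α]
    (μ ν : Measure α) [IsProbabilityMeasure μ] [IsProbabilityMeasure ν]
    (f : α → ℝ) (hf : Measurable f) (M : ℝ) (hM0 : 0 ≤ M) (hM : ∀ y, |f y| ≤ M) :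
    |(∫ y, f y ∂μ) - ∫ y, f y ∂ν| ≤ M * tvDist μ ν := by
  set s : SignedMeasure α := μ.toSignedMeasure - ν.toSignedMeasure with hs
  set P := s.toJordanDecomposition.posPart with hP
  set N := s.toJordanDecomposition.negPart with hN
  have hkey : ∀ B : Set α, MeasurableSet B →
      (μ B).toReal - (ν B).toReal = (P B).toReal - (N B).toReal := by
    intro B hB
    have h1 : s B = (μ B).toReal - (ν B).toReal :=
      MeasureTheory.Measure.toSignedMeasure_sub_apply hB
    have h2 : s.toJordanDecomposition.toSignedMeasure B = (P B).toReal - (N B).toReal := by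
      rw [JordanDecomposition.toSignedMeasure]
      rw [MeasureTheory.Measure.toSignedMeasure_sub_apply hB]
      rfl
    rw [SignedMeasure.toSignedMeasure_toJordanDecomposition] at h2
    rw [← h1, h2]
  -- μ + N = ν + P
  have hmeas : μ + N = ν + P := by
    ext B hB
    have h := hkey B hB
    have hμ : μ B ≠ ⊤ := measure_ne_top _ _
    have hν : ν B ≠ ⊤ := measure_ne_top _ _
    have hPB : P B ≠ ⊤ := measure_ne_top _ _
    have hNB : N B ≠ ⊤ := measure_ne_top _ _
    simp only [Measure.add_apply]
    rw [← ENNReal.toReal_eq_toReal_iff' (by finiteness) (by finiteness)]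
    rw [ENNReal.toReal_add hμ hNB, ENNReal.toReal_add hν hPB]
    linarith
  have hnorm : ∀ y, ‖f y‖ ≤ M := fun y => hM y
  have hint : ∀ (κ : Measure α) [IsFiniteMeasure κ], Integrable f κ := by
    intro κ _
    exact ⟨hf.aestronglyMeasurable, HasFiniteIntegral.of_bounded (ae_of_all _ hnorm)⟩
  have hintegral : (∫ y, f y ∂μ) + ∫ y, f y ∂N = (∫ y, f y ∂ν) + ∫ y, f y ∂P := by
    rw [← integral_add_measure (hint μ) (hint N), ← integral_add_measure (hint ν) (hint P),
      hmeas]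
  -- control P univ and N univ by the sup
  obtain ⟨S, hS, hPS, hNSc⟩ := s.toJordanDecomposition.mutuallySingular
  have hPuniv : (P Set.univ).toReal ≤
      ⨆ B : {B : Set α // MeasurableSet B}, |(μ B.1).toReal - (ν B.1).toReal| := by
    have hU : P Set.univ = P Sᶜ := by
      have : P Set.univ = P S + P Sᶜ := by
        rw [← measure_union (disjoint_compl_right) hS.compl, Set.union_compl_self]
      rw [this, hPS, zero_add]
    have hk := hkey Sᶜ hS.compl
    rw [hU]
    have : (P Sᶜ).toReal = (μ Sᶜ).toReal - (ν Sᶜ).toReal := by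
      rw [hk, hNSc]; simp
    rw [this]
    exact le_trans (le_abs_self _) (abs_diff_le_supDiff μ ν hS.compl)
  have hNuniv : (N Set.univ).toReal ≤
      ⨆ B : {B : Set α // MeasurableSet B}, |(μ B.1).toReal - (ν B.1).toReal| := by
    have hU : N Set.univ = N S := by
      have : N Set.univ = N S + N Sᶜ := by
        rw [← measure_union (disjoint_compl_right) hS.compl, Set.union_compl_self]
      rw [this, hNSc, add_zero]
    have hk := hkey S hS
    rw [hU]
    have : (N S).toReal = (ν S).toReal - (μ S).toReal := by
      rw [hPS] at hk; simp at hk; linarith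
    rw [this]
    calc (ν S).toReal - (μ S).toReal ≤ |(μ S).toReal - (ν S).toReal| := by
          rw [abs_sub_comm]; exact le_abs_self _
      _ ≤ _ := abs_diff_le_supDiff μ ν hS
  have hbP : |∫ y, f y ∂P| ≤ M * (P Set.univ).toReal := by
    simpa [Real.norm_eq_abs, Measure.real] using
      norm_integral_le_of_norm_le_const (μ := P) (f := f) (C := M) (ae_of_all _ hnorm)
  have hbN : |∫ y, f y ∂N| ≤ M * (N Set.univ).toReal := by
    simpa [Real.norm_eq_abs, Measure.real] using
      norm_integral_le_of_norm_le_const (μ := N) (f := f) (C := M) (ae_of_all _ hnorm)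
  have heq : (∫ y, f y ∂μ) - ∫ y, f y ∂ν = (∫ y, f y ∂P) - ∫ y, f y ∂N := by linarith
  rw [heq]
  calc |(∫ y, f y ∂P) - ∫ y, f y ∂N| ≤ |∫ y, f y ∂P| + |∫ y, f y ∂N| := abs_sub _ _
    _ ≤ M * (P Set.univ).toReal + M * (N Set.univ).toReal := add_le_add hbP hbN
    _ ≤ M * tvDist μ ν := by
        have h1 := mul_le_mul_of_nonneg_left hPuniv hM0
        have h2 := mul_le_mul_of_nonneg_left hNuniv hM0
        unfold tvDist; ring_nf; nlinarith [h1, h2]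

/-- If `Q` is continuous in total variation, `c` is bounded continuous, and `U` is compact,
then the family `x ↦ ∫ Q(dy|x) c(x,γ(y))`, indexed by measurable policies `γ`, is
equicontinuous: for any `x_k → x`,
`sup_γ |∫ Q(dy|x_k) c(x_k,γ(y)) − ∫ Q(dy|x) c(x,γ(y))| → 0`. -/
theorem equicontinuity_of_policy_family
    {X Y U : Type*}
    [MeasurableSpace X] [TopologicalSpace X] [BorelSpace X]
    [MeasurableSpace Y]
    [MeasurableSpace U] [TopologicalSpace U] [BorelSpace U] [CompactSpace U]
    (Q : Kernel X Y) [IsMarkovKernel Q]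
    (hQ : ∀ (z : ℕ → X) (x0 : X), Tendsto z atTop (nhds x0) →
      Tendsto (fun n => tvDist (Q (z n)) (Q x0)) atTop (nhds 0))
    (c : X → U → ℝ) (hc : Continuous (Function.uncurry c))
    (M : ℝ) (hcM : ∀ x u, |c x u| ≤ M)
    (x : X) (xk : ℕ → X) (hxk : Tendsto xk atTop (nhds x)) :
    Tendsto (fun k => ⨆ γ : {γ : Y → U // Measurable γ},
        |(∫ y, c (xk k) (γ.1 y) ∂(Q (xk k))) - ∫ y, c x (γ.1 y) ∂(Q x)|)
      atTop (nhds 0) := by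
  set M' := max M 0 with hM'
  have hM'0 : 0 ≤ M' := le_max_right _ _
  have hcM' : ∀ x u, |c x u| ≤ M' := fun x u => le_trans (hcM x u) (le_max_left _ _)
  -- the curried map into C(U, ℝ)
  set F : C(X, C(U, ℝ)) := ContinuousMap.curry ⟨Function.uncurry c, hc⟩ with hF
  have hFapp : ∀ (x' : X) (u : U), F x' u = c x' u := fun _ _ => rfl
  have hdist : Tendsto (fun k => dist (F (xk k)) (F x)) atTop (nhds 0) := by
    have h1 : Tendsto (fun k => F (xk k)) atTop (nhds (F x)) :=
      (F.continuous.tendsto x).comp hxk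
    simpa using tendsto_iff_dist_tendsto_zero.mp h1
  have htv := hQ xk x hxk
  -- the dominating sequence
  have hbound : ∀ k, (⨆ γ : {γ : Y → U // Measurable γ},
      |(∫ y, c (xk k) (γ.1 y) ∂(Q (xk k))) - ∫ y, c x (γ.1 y) ∂(Q x)|) ≤
      M' * tvDist (Q (xk k)) (Q x) + dist (F (xk k)) (F x) := by
    intro k
    apply Real.iSup_le
    · rintro ⟨γ, hγ⟩
      have hcont : ∀ x' : X, Continuous (c x') := fun x' =>
        hc.comp (Continuous.prodMk_right x')
      have hmeas : ∀ x' : X, Measurable (fun y => c x' (γ y)) := fun x' =>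
        ((hcont x').measurable).comp hγ
      have hintQ : ∀ (x' x'' : X), Integrable (fun y => c x' (γ y)) (Q x'') := by
        intro x' x''
        exact ⟨(hmeas x').aestronglyMeasurable,
          HasFiniteIntegral.of_bounded (C := M') (ae_of_all _ (fun y => hcM' x' (γ y)))⟩
      have h1 : |(∫ y, c (xk k) (γ y) ∂(Q (xk k))) - ∫ y, c (xk k) (γ y) ∂(Q x)| ≤
          M' * tvDist (Q (xk k)) (Q x) :=
        abs_integral_sub_le_tvDist (Q (xk k)) (Q x) _ (hmeas _) M' hM'0
          (fun y => hcM' _ _)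
      have h2 : |(∫ y, c (xk k) (γ y) ∂(Q x)) - ∫ y, c x (γ y) ∂(Q x)| ≤
          dist (F (xk k)) (F x) := by
        rw [← integral_sub (hintQ (xk k) x) (hintQ x x)]
        have hb : ∀ y, ‖c (xk k) (γ y) - c x (γ y)‖ ≤ dist (F (xk k)) (F x) := by
          intro y
          have := ContinuousMap.dist_apply_le_dist (f := F (xk k)) (g := F x) (γ y)
          rw [hFapp, hFapp, Real.dist_eq] at this
          simpa [Real.norm_eq_abs] using this
        have := norm_integral_le_of_norm_le_const (μ := Q x)
          (f := fun y => c (xk k) (γ y) - c x (γ y)) (ae_of_all _ hb)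
        simpa [Real.norm_eq_abs] using this
      calc |(∫ y, c (xk k) (γ y) ∂(Q (xk k))) - ∫ y, c x (γ y) ∂(Q x)| ≤
            |(∫ y, c (xk k) (γ y) ∂(Q (xk k))) - ∫ y, c (xk k) (γ y) ∂(Q x)| +
            |(∫ y, c (xk k) (γ y) ∂(Q x)) - ∫ y, c x (γ y) ∂(Q x)| :=
              abs_sub_le _ _ _
        _ ≤ _ := add_le_add h1 h2
    · have := tvDist_nonneg (Q (xk k)) (Q x)
      have := dist_nonneg (x := F (xk k)) (y := F x)
      positivity
  have hnonneg : ∀ k, 0 ≤ ⨆ γ : {γ : Y → U // Measurable γ},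
      |(∫ y, c (xk k) (γ.1 y) ∂(Q (xk k))) - ∫ y, c x (γ.1 y) ∂(Q x)| :=
    fun k => Real.iSup_nonneg (fun _ => abs_nonneg _)
  have hlim : Tendsto (fun k => M' * tvDist (Q (xk k)) (Q x) + dist (F (xk k)) (F x))
      atTop (nhds 0) := by
    have h1 : Tendsto (fun k => M' * tvDist (Q (xk k)) (Q x)) atTop (nhds 0) := by
      simpa using htv.const_mul M'
    simpa using h1.add hdist
  exact squeeze_zero hnonneg hbound hlim
end
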